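/- For any graphon W : [0,1]² → [0,1] (symmetric measurable), any finite graph H, any independent set I ⊆ V(H), and any positive integer q, the homomorphism density of the q-book of H along I satisfies t(H_I^q, W) ≥ t(H, W)^q. -/

import Mathlib

open MeasureTheory

abbrev unitI : Type := Set.Icc (0:ℝ) 1

structure Graphon where
  W : unitI → unitI → ℝ
  symm : ∀ x y, W x y = W y x
  measurable : Measurable fun p : unitI × unitI => W p.1 p.2
  nonneg : ∀ x y, 0 ≤ W x y
  le_one : ∀ x y, W x y ≤ 1

def Graphon.compl (W : Graphon) : Graphon where
  W x y := 1 - W.W x y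
  symm x y := by show 1 - W.W x y = 1 - W.W y x; rw [W.symm]
  measurable := measurable_const.sub W.measurable
  nonneg x y := by show 0 ≤ 1 - W.W x y; linarith [W.le_one x y]
  le_one x y := by show 1 - W.W x y ≤ 1; linarith [W.nonneg x y]

noncomputable def homDensity {V : Type} [Fintype V] (H : SimpleGraph V) (W : Graphon) : ℝ :=
  ∫ x : V → unitI,
    ∏ᶠ (e : Sym2 V) (_ : e ∈ H.edgeSet),
      Sym2.lift ⟨fun u v => W.W (x u) (x v), fun u v => W.symm (x u) (x v)⟩ e

def IsCommon {V : Type} [Fintype V] (H : SimpleGraph V) : Prop :=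
  ∀ W : Graphon,
    (2:ℝ) ^ (1 - (Nat.card H.edgeSet : ℤ)) ≤ homDensity H W + homDensity H W.compl

/-- Vertex set of the `q`-book of a graph on `V` along `I`. -/
abbrev BookVerts (V : Type) [DecidableEq V] (I : Finset V) (q : ℕ) : Type :=
  {v : V // v ∈ I} ⊕ (Fin q × {v : V // v ∉ I})

/-- The canonical embedding of the `j`-th page. -/
def bookEmb {V : Type} [DecidableEq V] (I : Finset V) (q : ℕ) (j : Fin q) (v : V) :
    BookVerts V I q :=
  if h : v ∈ I then Sum.inl ⟨v, h⟩ else Sum.inr (j, ⟨v, h⟩)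

lemma bookEmb_injective {V : Type} [DecidableEq V] (I : Finset V) (q : ℕ) (j : Fin q) :
    Function.Injective (bookEmb I q j) := by
  intro a b hab
  unfold bookEmb at hab
  split_ifs at hab with h1 h2 h2 <;> simp_all

/-- The `q`-book of `H` along `I`. -/
def book {V : Type} [DecidableEq V] (H : SimpleGraph V) (I : Finset V) (q : ℕ) :
    SimpleGraph (BookVerts V I q) where
  Adj a b := ∃ (j : Fin q) (u v : V), H.Adj u v ∧ a = bookEmb I q j u ∧ b = bookEmb I q j v
  symm := ⟨by rintro a b ⟨j, u, v, h, ha, hb⟩; exact ⟨j, v, u, h.symm, hb, ha⟩⟩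
  loopless := ⟨by
    rintro a ⟨j, u, v, h, ha, hb⟩
    exact H.loopless.irrefl v (by rwa [bookEmb_injective I q j (ha.symm.trans hb ▸ rfl : bookEmb I q j u = bookEmb I q j v)] at h)⟩

/-- `I` is an independent set of `H`. -/
def IndepIn {V : Type} (H : SimpleGraph V) (I : Finset V) : Prop :=
  ∀ u ∈ I, ∀ v ∈ I, ¬ H.Adj u v

-- aux lemmas, part 1
noncomputable def edgeW (W : Graphon) {α : Type*} (x : α → unitI) (e : Sym2 α) : ℝ :=
  Sym2.lift ⟨fun u v => W.W (x u) (x v), fun u v => W.symm (x u) (x v)⟩ e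

lemma edgeW_nonneg (W : Graphon) {α : Type*} (x : α → unitI) (e : Sym2 α) : 0 ≤ edgeW W x e := by
  induction e using Sym2.ind with
  | _ u v => exact W.nonneg _ _

lemma edgeW_le_one (W : Graphon) {α : Type*} (x : α → unitI) (e : Sym2 α) : edgeW W x e ≤ 1 := by
  induction e using Sym2.ind with
  | _ u v => exact W.le_one _ _

lemma measurable_edgeW (W : Graphon) {α β : Type*} [MeasurableSpace β] (e : Sym2 α)
    (g : β → α → unitI) (hg : Measurable g) : Measurable fun b => edgeW W (g b) e := by
  induction e using Sym2.ind with
  | _ u v =>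
    exact W.measurable.comp (((measurable_pi_apply u).comp hg).prodMk
      ((measurable_pi_apply v).comp hg))

lemma edgeW_map (W : Graphon) {α γ : Type*} (f : α → γ) (x : γ → unitI) (e : Sym2 α) :
    edgeW W x (Sym2.map f e) = edgeW W (x ∘ f) e := by
  induction e using Sym2.ind with
  | _ u v => rfl

lemma homDensity_eq {V : Type} [Fintype V] (H : SimpleGraph V) (W : Graphon)
    (s : Finset (Sym2 V)) (hs : ↑s = H.edgeSet) :
    homDensity H W = ∫ x : V → unitI, ∏ e ∈ s, edgeW W x e := by
  unfold homDensity
  congr 1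
  funext x
  rw [← hs, finprod_mem_coe_finset]
  exact Finset.prod_congr rfl fun e _ => rfl

lemma integrable_of_bounded {α : Type*} [MeasurableSpace α] {μ : MeasureTheory.Measure α}
    [MeasureTheory.IsFiniteMeasure μ] {f : α → ℝ} (hm : MeasureTheory.AEStronglyMeasurable f μ)
    (h0 : ∀ x, 0 ≤ f x) (h1 : ∀ x, f x ≤ 1) : MeasureTheory.Integrable f μ := by
  refine (MeasureTheory.integrable_const (1:ℝ)).mono' hm ?_
  exact Filter.Eventually.of_forall fun x => by
    rw [Real.norm_eq_abs, abs_of_nonneg (h0 x)]; exact h1 x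

-- the curry equiv for the induction
def finSuccProdEquiv (n : ℕ) (κ : Type*) : (κ ⊕ (Fin n × κ)) ≃ (Fin (n+1) × κ) where
  toFun := Sum.elim (fun b => ((0 : Fin (n+1)), b)) (fun p => (p.1.succ, p.2))
  invFun p := Fin.cases (Sum.inl p.2) (fun i => Sum.inr (i, p.2)) p.1
  left_inv x := by rcases x with b | ⟨i, b⟩ <;> simp
  right_inv p := by
    obtain ⟨j, b⟩ := p
    refine Fin.cases ?_ (fun i => ?_) j <;> simp

lemma curry_pow {κ E : Type} [Fintype κ] [MeasureSpace E]
    [SigmaFinite (volume : Measure E)] (n : ℕ) (f : (κ → E) → ℝ) :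
    ∫ x : Fin n × κ → E, ∏ j : Fin n, f (fun b => x (j, b)) = (∫ z : κ → E, f z) ^ n := by
  induction n with
  | zero =>
    simp only [Finset.univ_eq_empty, Finset.prod_empty, pow_zero]
    have : IsProbabilityMeasure (volume : Measure (Fin 0 × κ → E)) := by
      constructor
      rw [MeasureTheory.volume_pi, MeasureTheory.Measure.pi_univ]
      simp
    simp
  | succ n ih =>
    have h1 := (MeasureTheory.volume_measurePreserving_piCongrLeft
      (fun _ : Fin (n+1) × κ => E) (finSuccProdEquiv n κ)).integral_comp'
      (fun x : Fin (n+1) × κ → E => ∏ j : Fin (n+1), f (fun b => x (j, b)))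
    have h2 := (MeasureTheory.volume_measurePreserving_sumPiEquivProdPi_symm
      (fun _ : κ ⊕ (Fin n × κ) => E)).integral_comp'
      (fun w : (κ ⊕ (Fin n × κ)) → E => ∏ j : Fin (n+1),
        f (fun b => (MeasurableEquiv.piCongrLeft (fun _ : Fin (n+1) × κ => E)
          (finSuccProdEquiv n κ) w) (j, b)))
    have key : ∀ (y : κ → E) (z : Fin n × κ → E),
        (∏ j : Fin (n+1), f (fun b =>
          (MeasurableEquiv.piCongrLeft (fun _ : Fin (n+1) × κ => E) (finSuccProdEquiv n κ))
            ((MeasurableEquiv.sumPiEquivProdPi (fun _ : κ ⊕ (Fin n × κ) => E)).symm (y, z))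
            (j, b)))
          = f y * ∏ i : Fin n, f (fun b => z (i, b)) := by
      intro y z
      set w := (MeasurableEquiv.sumPiEquivProdPi (fun _ : κ ⊕ (Fin n × κ) => E)).symm (y, z) with hw
      have hval : ∀ (j : Fin (n+1)) (b : κ),
          (MeasurableEquiv.piCongrLeft (fun _ : Fin (n+1) × κ => E) (finSuccProdEquiv n κ)) w (j, b)
            = Fin.cases (y b) (fun i => z (i, b)) j := by
        intro j b
        refine Fin.cases ?_ (fun i => ?_) j
        · exact MeasurableEquiv.piCongrLeft_apply_apply (β := fun _ : Fin (n+1) × κ => E)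
            (finSuccProdEquiv n κ) w (.inl b)
        · exact MeasurableEquiv.piCongrLeft_apply_apply (β := fun _ : Fin (n+1) × κ => E)
            (finSuccProdEquiv n κ) w (.inr (i, b))
      have h0' : ∀ b, (MeasurableEquiv.piCongrLeft (fun _ : Fin (n+1) × κ => E)
          (finSuccProdEquiv n κ)) w ((0 : Fin (n+1)), b) = y b :=
        fun b => (hval 0 b).trans (by simp)
      have hs' : ∀ (i : Fin n) (b : κ), (MeasurableEquiv.piCongrLeft (fun _ : Fin (n+1) × κ => E)
          (finSuccProdEquiv n κ)) w (i.succ, b) = z (i, b) :=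
        fun i b => (hval i.succ b).trans (by simp)
      rw [Fin.prod_univ_succ]
      refine congrArg₂ (· * ·) (congrArg f (funext h0')) ?_
      exact Finset.prod_congr rfl fun i _ => congrArg f (funext (hs' i))
    rw [← h1]
    rw [← h2]
    have heq : (∫ x : (κ → E) × ((Fin n × κ) → E), ∏ j : Fin (n+1),
        f fun b => (MeasurableEquiv.piCongrLeft (fun _ : Fin (n+1) × κ => E)
          (finSuccProdEquiv n κ))
          ((MeasurableEquiv.sumPiEquivProdPi fun _ : κ ⊕ (Fin n × κ) => E).symm x) (j, b))
        = ∫ x : (κ → E) × ((Fin n × κ) → E), f x.1 * ∏ i : Fin n, f fun b => x.2 (i, b) :=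
      MeasureTheory.integral_congr_ae (Filter.Eventually.of_forall fun p => key p.1 p.2)
    rw [heq, MeasureTheory.Measure.volume_eq_prod,
      MeasureTheory.integral_prod_mul (f := f)
        (g := fun t : (Fin n × κ) → E => ∏ i : Fin n, f fun b => t (i, b)),
      ih, pow_succ, mul_comm]

lemma bookEmb_eq_cases {V : Type} [DecidableEq V] {I : Finset V} {q : ℕ} {j j' : Fin q}
    {u u' : V} (h : bookEmb I q j u = bookEmb I q j' u') : u = u' ∧ (u ∈ I ∨ j = j') := by
  unfold bookEmb at h
  split_ifs at h with h1 h2 h2 <;> simp_all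

lemma book_prod {V : Type} [DecidableEq V] (W : Graphon) (H : SimpleGraph V) (I : Finset V)
    (hI : IndepIn H I) (q : ℕ) (s : Finset (Sym2 V)) (hs : ↑s = H.edgeSet)
    (t : Finset (Sym2 (BookVerts V I q))) (ht : ↑t = (book H I q).edgeSet)
    (x : BookVerts V I q → unitI) :
    ∏ e ∈ t, edgeW W x e = ∏ j : Fin q, ∏ e ∈ s, edgeW W (x ∘ bookEmb I q j) e := by
  have hmem : ∀ e, e ∈ s ↔ e ∈ H.edgeSet := by
    intro e; rw [← hs]; rfl
  have hmem' : ∀ e, e ∈ t ↔ e ∈ (book H I q).edgeSet := by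
    intro e; rw [← ht]; rfl
  rw [← Finset.prod_product
    (f := fun p : Fin q × Sym2 V => edgeW W (x ∘ bookEmb I q p.1) p.2)]
  symm
  refine Finset.prod_nbij (fun p => Sym2.map (bookEmb I q p.1) p.2) ?_ ?_ ?_ ?_
  · rintro ⟨j, e⟩ hp
    rw [Finset.mem_product] at hp
    have he : e ∈ H.edgeSet := (hmem e).1 hp.2
    rw [hmem']
    induction e using Sym2.ind with
    | _ u v =>
      dsimp only
      rw [Sym2.map_pair_eq, SimpleGraph.mem_edgeSet]
      exact ⟨j, u, v, he, rfl, rfl⟩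
  · rintro ⟨j, e⟩ hp ⟨j', e'⟩ hp' heq
    simp only [Finset.coe_product, Set.mem_prod, Finset.mem_coe] at hp hp'
    have he : e ∈ H.edgeSet := (hmem e).1 hp.2
    have he' : e' ∈ H.edgeSet := (hmem e').1 hp'.2
    clear hp hp'
    induction e using Sym2.ind with
    | _ u v =>
    induction e' using Sym2.ind with
    | _ u' v' =>
      rw [SimpleGraph.mem_edgeSet] at he he'
      dsimp only at heq
      rw [Sym2.map_pair_eq, Sym2.map_pair_eq, Sym2.eq_iff] at heq
      have hnotI : ¬ (u ∈ I ∧ v ∈ I) := fun ⟨h1, h2⟩ => hI u h1 v h2 he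
      rcases heq with ⟨h1, h2⟩ | ⟨h1, h2⟩
      · obtain ⟨huu, hju⟩ := bookEmb_eq_cases h1
        obtain ⟨hvv, hjv⟩ := bookEmb_eq_cases h2
        have hj : j = j' := by
          rcases hju with hu | hj
          · rcases hjv with hv | hj
            · exact absurd ⟨hu, hv⟩ hnotI
            · exact hj
          · exact hj
        subst huu hvv hj
        rfl
      · obtain ⟨huu, hju⟩ := bookEmb_eq_cases h1
        obtain ⟨hvv, hjv⟩ := bookEmb_eq_cases h2
        have hj : j = j' := by
          rcases hju with hu | hj
          · rcases hjv with hv | hj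
            · exact absurd ⟨hu, hv⟩ hnotI
            · exact hj
          · exact hj
        subst huu hvv hj
        simp [Prod.ext_iff, Sym2.eq_swap]
  · intro f hf
    rw [Finset.mem_coe, hmem'] at hf
    induction f using Sym2.ind with
    | _ a b =>
      rw [SimpleGraph.mem_edgeSet] at hf
      obtain ⟨j, u, v, hadj, ha, hb⟩ := hf
      refine ⟨(j, s(u, v)), ?_, ?_⟩
      · simp only [Finset.coe_product, Set.mem_prod, Finset.mem_coe, Finset.mem_univ, true_and]
        rw [hmem, SimpleGraph.mem_edgeSet]
        exact hadj
      · dsimp only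
        rw [Sym2.map_pair_eq, ha, hb]
  · rintro ⟨j, e⟩ _
    exact (edgeW_map W (bookEmb I q j) x e).symm

/-- Jensen's inequality for the `q`-book: `t(H_I^q, W) ≥ t(H, W)^q`. -/
theorem book_homDensity_ge {V : Type} [Fintype V] [DecidableEq V]
    (H : SimpleGraph V) (I : Finset V) (hI : IndepIn H I) (q : ℕ) (hq : 0 < q)
    (W : Graphon) :
    homDensity H W ^ q ≤ homDensity (book H I q) W := by
  classical
  set A := {v : V // v ∈ I} with hA
  set B := {v : V // v ∉ I} with hB
  set ES : Finset (Sym2 V) := H.edgeSet.toFinite.toFinset with hES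
  have hESc : ↑ES = H.edgeSet := Set.Finite.coe_toFinset _
  set ESb : Finset (Sym2 (BookVerts V I q)) := (book H I q).edgeSet.toFinite.toFinset with hESb
  have hESbc : ↑ESb = (book H I q).edgeSet := Set.Finite.coe_toFinset _
  -- the combined assignment
  set ass : (A → unitI) × (B → unitI) → (V → unitI) :=
    fun w v => if h : v ∈ I then w.1 ⟨v, h⟩ else w.2 ⟨v, h⟩ with hass
  have hass_meas : Measurable ass := by
    apply measurable_pi_lambda
    intro v
    by_cases h : v ∈ I
    · simp only [hass, dif_pos h]; exact (measurable_pi_apply _).comp measurable_fst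
    · simp only [hass, dif_neg h]; exact (measurable_pi_apply _).comp measurable_snd
  set F : (A → unitI) × (B → unitI) → ℝ := fun w => ∏ e ∈ ES, edgeW W (ass w) e with hF
  have hF_meas : Measurable F :=
    Finset.measurable_prod _ fun e _ => measurable_edgeW W e ass hass_meas
  have hF0 : ∀ w, 0 ≤ F w := fun w => Finset.prod_nonneg fun e _ => edgeW_nonneg W _ e
  have hF1 : ∀ w, F w ≤ 1 := fun w =>
    Finset.prod_le_one (fun e _ => edgeW_nonneg W _ e) (fun e _ => edgeW_le_one W _ e)
  have hF_int : MeasureTheory.Integrable F ((volume : Measure (A → unitI)).prod volume) := by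
    rw [← MeasureTheory.Measure.volume_eq_prod]
    exact integrable_of_bounded hF_meas.aestronglyMeasurable hF0 hF1
  set g : (A → unitI) → ℝ := fun y => ∫ z : B → unitI, F (y, z) with hg
  -- Step A : homDensity H W = ∫ y, g y
  have hmpA1 := MeasureTheory.volume_measurePreserving_piCongrLeft (fun _ : V => unitI)
    (Equiv.sumCompl (fun v : V => v ∈ I))
  have hmpA2 := MeasureTheory.volume_measurePreserving_sumPiEquivProdPi_symm
    (fun _ : A ⊕ B => unitI)
  have hA1 : homDensity H W = ∫ y : A → unitI, g y := by
    rw [homDensity_eq H W ES hESc,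
      ← hmpA1.integral_comp' (fun x : V → unitI => ∏ e ∈ ES, edgeW W x e),
      ← hmpA2.integral_comp' _]
    have : ∀ w : (A → unitI) × (B → unitI),
        (∏ e ∈ ES, edgeW W
          ((MeasurableEquiv.piCongrLeft (fun _ : V => unitI)
              (Equiv.sumCompl (fun v : V => v ∈ I)))
            ((MeasurableEquiv.sumPiEquivProdPi (fun _ : A ⊕ B => unitI)).symm w)) e)
          = F w := by
      intro w
      refine Finset.prod_congr rfl fun e _ => ?_
      congr 1
      funext v
      by_cases h : v ∈ I
      · have h1 := MeasurableEquiv.piCongrLeft_apply_apply (β := fun _ : V => unitI)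
          (Equiv.sumCompl (fun v : V => v ∈ I))
          ((MeasurableEquiv.sumPiEquivProdPi (fun _ : A ⊕ B => unitI)).symm w)
          (Sum.inl ⟨v, h⟩)
        simp only [hass]
        rw [dif_pos h]
        exact h1
      · have h1 := MeasurableEquiv.piCongrLeft_apply_apply (β := fun _ : V => unitI)
          (Equiv.sumCompl (fun v : V => v ∈ I))
          ((MeasurableEquiv.sumPiEquivProdPi (fun _ : A ⊕ B => unitI)).symm w)
          (Sum.inr ⟨v, h⟩)
        simp only [hass]
        rw [dif_neg h]
        exact h1
    rw [MeasureTheory.integral_congr_ae (Filter.Eventually.of_forall this),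
      MeasureTheory.Measure.volume_eq_prod]
    exact MeasureTheory.integral_prod F hF_int
  -- Step B : homDensity (book) W = ∫ y, (g y) ^ q
  have hmpB := MeasureTheory.volume_measurePreserving_sumPiEquivProdPi_symm
    (fun _ : A ⊕ (Fin q × B) => unitI)
  have hInt2 : MeasureTheory.Integrable
      (fun w : (A → unitI) × ((Fin q × B) → unitI) => ∏ j : Fin q, F (w.1, fun b => w.2 (j, b)))
      ((volume : Measure (A → unitI)).prod volume) := by
    rw [← MeasureTheory.Measure.volume_eq_prod]
    refine integrable_of_bounded ?_ (fun w => Finset.prod_nonneg fun j _ => hF0 _)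
      (fun w => Finset.prod_le_one (fun j _ => hF0 _) (fun j _ => hF1 _))
    refine (Finset.measurable_prod _ fun j _ => ?_).aestronglyMeasurable
    exact hF_meas.comp (measurable_fst.prodMk
      (measurable_pi_lambda _ fun b => (measurable_pi_apply (j, b)).comp measurable_snd))
  have hB1 : homDensity (book H I q) W = ∫ y : A → unitI, (g y) ^ q := by
    rw [homDensity_eq (book H I q) W ESb hESbc,
      ← hmpB.integral_comp' (fun x : BookVerts V I q → unitI => ∏ e ∈ ESb, edgeW W x e)]
    have : ∀ w : (A → unitI) × ((Fin q × B) → unitI),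
        (∏ e ∈ ESb, edgeW W
          ((MeasurableEquiv.sumPiEquivProdPi (fun _ : A ⊕ (Fin q × B) => unitI)).symm w) e)
          = ∏ j : Fin q, F (w.1, fun b => w.2 (j, b)) := by
      intro w
      rw [book_prod W H I hI q ES hESc ESb hESbc]
      refine Finset.prod_congr rfl fun j _ => Finset.prod_congr rfl fun e _ => ?_
      congr 1
      funext v
      show ((MeasurableEquiv.sumPiEquivProdPi (fun _ : A ⊕ (Fin q × B) => unitI)).symm w)
        (bookEmb I q j v) = _
      simp only [hass]
      unfold bookEmb
      split_ifs with h
      · rfl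
      · rfl
    rw [MeasureTheory.integral_congr_ae (Filter.Eventually.of_forall this),
      MeasureTheory.Measure.volume_eq_prod,
      MeasureTheory.integral_prod _ hInt2]
    refine MeasureTheory.integral_congr_ae (Filter.Eventually.of_forall fun y => ?_)
    exact curry_pow q (fun z : B → unitI => F (y, z))
  -- Step C : Jensen
  have hg_sm : MeasureTheory.StronglyMeasurable g :=
    MeasureTheory.StronglyMeasurable.integral_prod_right
      (f := fun y z => F (y, z)) hF_meas.stronglyMeasurable
  have hg0 : ∀ y, 0 ≤ g y := fun y => MeasureTheory.integral_nonneg fun z => hF0 (y, z)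
  have hg1 : ∀ y, g y ≤ 1 := by
    intro y
    have h1 : MeasureTheory.Integrable (fun z : B → unitI => F (y, z)) :=
      integrable_of_bounded (hF_meas.comp measurable_prodMk_left).aestronglyMeasurable
        (fun z => hF0 _) (fun z => hF1 _)
    calc g y ≤ ∫ _ : B → unitI, (1:ℝ) :=
          MeasureTheory.integral_mono h1 (MeasureTheory.integrable_const 1) fun z => hF1 (y, z)
      _ = 1 := by simp
  have hg_int : MeasureTheory.Integrable g :=
    integrable_of_bounded hg_sm.aestronglyMeasurable hg0 hg1
  have hgq_int : MeasureTheory.Integrable (fun y => g y ^ q) :=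
    integrable_of_bounded ((continuous_pow q).comp_stronglyMeasurable hg_sm).aestronglyMeasurable
      (fun y => pow_nonneg (hg0 y) q) (fun y => pow_le_one₀ (hg0 y) (hg1 y))
  have hjensen := (convexOn_pow q).map_integral_le (μ := (volume : Measure (A → unitI)))
    ((continuous_pow q).continuousOn) isClosed_Ici
    (Filter.Eventually.of_forall fun y => hg0 y) hg_int hgq_int
  rw [hA1, hB1]
  exact hjensen
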